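/- Let U be a self-adjoint unitary operator on H which commutes with X_B and satisfies U·X_B = (X_B²)^{1/2}, the positive semidefinite square root of X_B². Then for every vector ψ ∈ H, ‖(U − X_B)ψ‖ ≤ (cos²(φ)/sin²(φ))·‖(1 − Z_B²)ψ‖. -/

import Mathlib

/-- The operator `Z_B = (B₀ + B₁)/(2 cos φ)`. -/
noncomputable def ZB {H : Type*} [AddCommGroup H] [Module ℂ H]
    (B₀ B₁ : H →ₗ[ℂ] H) (φ : ℝ) : H →ₗ[ℂ] H :=
  (((2 * Real.cos φ : ℝ) : ℂ))⁻¹ • (B₀ + B₁)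

/-- The operator `X_B = (B₀ − B₁)/(2 sin φ)`. -/
noncomputable def XB {H : Type*} [AddCommGroup H] [Module ℂ H]
    (B₀ B₁ : H →ₗ[ℂ] H) (φ : ℝ) : H →ₗ[ℂ] H :=
  (((2 * Real.sin φ : ℝ) : ℂ))⁻¹ • (B₀ - B₁)

/-- Spectral inequality: for a positive symmetric operator `A`,
`‖(1 - A) ψ‖ ≤ ‖(A² - 1) ψ‖`. -/
lemma aux_norm_le {H : Type*} [NormedAddCommGroup H] [InnerProductSpace ℂ H]
    [FiniteDimensional ℂ H] (A : H →ₗ[ℂ] H) (hA : A.IsSymmetric)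
    (hApos : ∀ ψ : H, 0 ≤ (inner ℂ ψ (A ψ) : ℂ).re) (ψ : H) :
    ‖(1 - A) ψ‖ ≤ ‖(A * A - 1) ψ‖ := by
  set n := Module.finrank ℂ H with hn
  set b := hA.eigenvectorBasis rfl with hbdef
  set μ : Fin n → ℝ := hA.eigenvalues rfl with hμ
  have hb : ∀ i, A (b i) = (μ i : ℂ) • b i := fun i => hA.apply_eigenvectorBasis rfl i
  have hμpos : ∀ i, 0 ≤ μ i := by
    intro i
    have h := hApos (b i)
    rw [hb i, inner_smul_right, inner_self_eq_norm_sq_to_K, b.orthonormal.1 i] at h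
    simpa using h
  have hnorm : ∀ v : H, ‖v‖ ^ 2 = ∑ i, ‖b.repr v i‖ ^ 2 := by
    intro v
    rw [← b.repr.norm_map v, EuclideanSpace.norm_eq, Real.sq_sqrt (by positivity)]
  have key : ∀ (T : H →ₗ[ℂ] H), T.IsSymmetric → ∀ (r : Fin n → ℝ),
      (∀ i, T (b i) = (r i : ℂ) • b i) →
      ∀ i, b.repr (T ψ) i = (r i : ℂ) * b.repr ψ i := by
    intro T hT r hr i
    rw [b.repr_apply_apply, ← hT, hr i, inner_smul_left, b.repr_apply_apply]
    simp
  have h1 : ∀ i, (1 - A) (b i) = ((1 - μ i : ℝ) : ℂ) • b i := by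
    intro i
    simp [hb i, sub_smul]
  have h2 : ∀ i, (A * A - 1) (b i) = ((μ i ^ 2 - 1 : ℝ) : ℂ) • b i := by
    intro i
    have hAA : A (A (b i)) = ((μ i : ℂ)) ^ 2 • b i := by
      rw [hb i, map_smul, hb i, smul_smul, sq]
    simp [Module.End.mul_apply, hAA, sub_smul]
  have hA1 : (1 - A).IsSymmetric := LinearMap.IsSymmetric.sub LinearMap.IsSymmetric.id hA
  have hA2 : (A * A - 1).IsSymmetric :=
    LinearMap.IsSymmetric.sub (hA.mul_of_commute hA rfl) LinearMap.IsSymmetric.id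
  have c1 := key _ hA1 _ h1
  have c2 := key _ hA2 _ h2
  have hsq : ‖(1 - A) ψ‖ ^ 2 ≤ ‖(A * A - 1) ψ‖ ^ 2 := by
    rw [hnorm, hnorm]
    apply Finset.sum_le_sum
    intro i _
    rw [c1 i, c2 i, norm_mul, norm_mul, mul_pow, mul_pow]
    have hμi := hμpos i
    have : ‖((1 - μ i : ℝ) : ℂ)‖ ^ 2 ≤ ‖((μ i ^ 2 - 1 : ℝ) : ℂ)‖ ^ 2 := by
      rw [Complex.norm_real, Complex.norm_real, Real.norm_eq_abs, Real.norm_eq_abs,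
        sq_abs, sq_abs]
      nlinarith [sq_nonneg (1 - μ i), sq_nonneg (μ i)]
    exact mul_le_mul_of_nonneg_right this (by positivity)
  calc ‖(1 - A) ψ‖ = Real.sqrt (‖(1 - A) ψ‖ ^ 2) := (Real.sqrt_sq (norm_nonneg _)).symm
    _ ≤ Real.sqrt (‖(A * A - 1) ψ‖ ^ 2) := Real.sqrt_le_sqrt hsq
    _ = ‖(A * A - 1) ψ‖ := Real.sqrt_sq (norm_nonneg _)

/-- Algebraic identity: `X_B² - 1 = (cos²φ/sin²φ) • (1 - Z_B²)`. -/
lemma XB_sq_sub_one {H : Type*} [NormedAddCommGroup H] [InnerProductSpace ℂ H]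
    [FiniteDimensional ℂ H]
    (B₀ B₁ : H →ₗ[ℂ] H)
    (hB₀sq : B₀ * B₀ = 1) (hB₁sq : B₁ * B₁ = 1)
    (φ : ℝ) (hc : Real.cos φ ≠ 0) (hs : Real.sin φ ≠ 0) :
    XB B₀ B₁ φ * XB B₀ B₁ φ - 1
      = ((Real.cos φ ^ 2 / Real.sin φ ^ 2 : ℝ) : ℂ) •
        ((1 : H →ₗ[ℂ] H) - ZB B₀ B₁ φ * ZB B₀ B₁ φ) := by
  have hc' : Complex.cos φ ≠ 0 := by
    rw [← Complex.ofReal_cos]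
    exact Complex.ofReal_ne_zero.mpr hc
  have hs' : Complex.sin φ ≠ 0 := by
    rw [← Complex.ofReal_sin]
    exact Complex.ofReal_ne_zero.mpr hs
  have htrig : Complex.sin φ ^ 2 + Complex.cos φ ^ 2 = 1 := Complex.sin_sq_add_cos_sq φ
  unfold XB ZB
  rw [smul_mul_smul_comm, smul_mul_smul_comm]
  have e1 : (B₀ - B₁) * (B₀ - B₁) = (2 : ℂ) • (1 : H →ₗ[ℂ] H) - (B₀*B₁ + B₁*B₀) := by
    simp only [sub_mul, mul_sub, hB₀sq, hB₁sq]
    module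
  have e2 : (B₀ + B₁) * (B₀ + B₁) = (2 : ℂ) • (1 : H →ₗ[ℂ] H) + (B₀*B₁ + B₁*B₀) := by
    simp only [add_mul, mul_add, hB₀sq, hB₁sq]
    module
  rw [e1, e2]
  match_scalars
  · field_simp
    linear_combination (-2) * htrig
  all_goals
    field_simp

/-- Let `U` be a self-adjoint unitary operator on `H` commuting with `X_B`
and such that `U·X_B` is the positive semidefinite square root of `X_B²` (i.e. `U·X_B` is
symmetric, positive, and `(U·X_B)² = X_B²`). Then for every `ψ ∈ H`,
`‖(U − X_B)ψ‖ ≤ (cos²(φ)/sin²(φ))·‖(1 − Z_B²)ψ‖`. -/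
theorem regularized_XB_close {H : Type*} [NormedAddCommGroup H] [InnerProductSpace ℂ H]
    [FiniteDimensional ℂ H]
    (B₀ B₁ : H →ₗ[ℂ] H) (hB₀ : B₀.IsSymmetric) (hB₁ : B₁.IsSymmetric)
    (hB₀sq : B₀ * B₀ = 1) (hB₁sq : B₁ * B₁ = 1)
    (φ : ℝ) (hc : Real.cos φ ≠ 0) (hs : Real.sin φ ≠ 0)
    (U : H →ₗ[ℂ] H) (hU : U.IsSymmetric) (hUU : U * U = 1)
    (hcomm : U * XB B₀ B₁ φ = XB B₀ B₁ φ * U)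
    (hsym : (U * XB B₀ B₁ φ).IsSymmetric)
    (hpos : ∀ ψ : H, 0 ≤ (inner ℂ ψ ((U * XB B₀ B₁ φ) ψ) : ℂ).re)
    (hsqrt : (U * XB B₀ B₁ φ) * (U * XB B₀ B₁ φ) = XB B₀ B₁ φ * XB B₀ B₁ φ)
    (ψ : H) :
    ‖(U - XB B₀ B₁ φ) ψ‖
      ≤ (Real.cos φ ^ 2 / Real.sin φ ^ 2) *
          ‖((1 : H →ₗ[ℂ] H) - ZB B₀ B₁ φ * ZB B₀ B₁ φ) ψ‖ := by
  set X := XB B₀ B₁ φ with hX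
  set A := U * X with hA
  -- `U - X = U * (1 - A)`
  have hfac : U - X = U * (1 - A) := by
    rw [hA, mul_sub, mul_one, ← mul_assoc, hUU, one_mul]
  -- `U` preserves norms
  have hUnorm : ∀ v : H, ‖U v‖ = ‖v‖ := by
    intro v
    have hUUv : U (U v) = v := by
      rw [← Module.End.mul_apply, hUU, Module.End.one_apply]
    have h := hU v (U v)
    rw [hUUv] at h
    have hsq : ‖U v‖ ^ 2 = ‖v‖ ^ 2 := by
      rw [← @inner_self_eq_norm_sq ℂ, ← @inner_self_eq_norm_sq ℂ, h]
    rw [← Real.sqrt_sq (norm_nonneg (U v)), ← Real.sqrt_sq (norm_nonneg v), hsq]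
  have step1 : ‖(U - X) ψ‖ = ‖(1 - A) ψ‖ := by
    rw [hfac, Module.End.mul_apply, hUnorm]
  have step2 : ‖(1 - A) ψ‖ ≤ ‖(A * A - 1) ψ‖ := aux_norm_le A hsym hpos ψ
  have step3 : A * A - 1 = ((Real.cos φ ^ 2 / Real.sin φ ^ 2 : ℝ) : ℂ) •
      ((1 : H →ₗ[ℂ] H) - ZB B₀ B₁ φ * ZB B₀ B₁ φ) := by
    rw [hA, hsqrt, hX]
    exact XB_sq_sub_one B₀ B₁ hB₀sq hB₁sq φ hc hs
  have hr : (0:ℝ) ≤ Real.cos φ ^ 2 / Real.sin φ ^ 2 := by positivity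
  calc ‖(U - X) ψ‖ = ‖(1 - A) ψ‖ := step1
    _ ≤ ‖(A * A - 1) ψ‖ := step2
    _ = (Real.cos φ ^ 2 / Real.sin φ ^ 2) *
          ‖((1 : H →ₗ[ℂ] H) - ZB B₀ B₁ φ * ZB B₀ B₁ φ) ψ‖ := by
        rw [step3, LinearMap.smul_apply, norm_smul, Complex.norm_real, Real.norm_eq_abs,
          abs_of_nonneg hr]
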